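/- Let q be a power of 3 and r ∈ F_q^×. The projective plane curve E_r : S^2 = T^3 + T^2 - r^{-1} is a smooth (elliptic) curve over F_q, and the points (T,S) = (t_0, ± t_0) with t_0^3 = r^{-1} (i.e. t_0 = r^{-1/3}, the unique cube root) are flex points; consequently the number of F_q-rational points #E_r(F_q) (including the point at infinity) is divisible by 3. -/

import Mathlib

open WeierstrassCurve.Affine WeierstrassCurve.Affine.Point

/-- Let `q` be a power of 3 and `r ∈ F_q^×`.  The curve
`E_r : S² = T³ + T² - r⁻¹` is a smooth elliptic curve over `F_q` (its
Weierstrass discriminant is nonzero), and the number of `F_q`-rational points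
`#E_r(F_q)` (affine points plus the point at infinity) is divisible by 3. -/
theorem stmt15 (F : Type*) [Field F] [Fintype F] [CharP F 3] (r : F) (hr : r ≠ 0) :
    (WeierstrassCurve.Δ ⟨0, 1, 0, 0, -r⁻¹⟩ : F) ≠ 0 ∧
    3 ∣ 1 + Nat.card {p : F × F // p.2 ^ 2 = p.1 ^ 3 + p.1 ^ 2 - r⁻¹} := by
  have h3 : (3 : F) = 0 := by exact_mod_cast CharP.cast_eq_zero F 3
  set W : WeierstrassCurve.Affine F := ⟨0, 1, 0, 0, -r⁻¹⟩ with hW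
  have hΔ : W.Δ ≠ 0 := by
    have : W.Δ = r⁻¹ := by
      simp only [WeierstrassCurve.Δ, WeierstrassCurve.b₂, WeierstrassCurve.b₄,
        WeierstrassCurve.b₆, WeierstrassCurve.b₈, hW]
      ring_nf
      linear_combination (21 * r⁻¹ - 144 * r⁻¹ ^ 2) * h3
    rw [this]
    exact inv_ne_zero hr
  refine ⟨hΔ, ?_⟩
  -- the cube root
  obtain ⟨t, ht⟩ := (frobeniusEquiv F 3).surjective r⁻¹
  have ht3 : t ^ 3 = r⁻¹ := ht
  have htne : t ≠ 0 := by
    intro h; apply inv_ne_zero hr; rw [← ht3, h]; ring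
  -- the equation/nonsingular point
  have heqP : W.Equation t t := by
    rw [equation_iff]
    simp only [hW]
    linear_combination -ht3
  have hP : W.Nonsingular t t := (W.equation_iff_nonsingular_of_Δ_ne_zero hΔ).mp heqP
  have hnegY : ∀ x y : F, W.negY x y = -y := by
    intro x y; simp [negY, hW]
  have htne' : t ≠ W.negY t t := by
    rw [hnegY]
    intro h
    apply htne
    have h2 : (2 : F) * t = 0 := by linear_combination h
    have : (2 : F) ≠ 0 := by
      intro h2'
      have : (1 : F) = 0 := by linear_combination h3 - h2'
      exact one_ne_zero this
    exact (mul_eq_zero.mp h2).resolve_left this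
  set P : W.Point := some _ _ hP with hPdef
  -- compute the slope of the tangent at P
  have hden : t - -t ≠ 0 := by
    have := sub_ne_zero.mpr htne'
    rwa [hnegY] at this
  classical
  have hslope : W.slope t t t t = 1 := by
    rw [slope_of_Y_ne rfl htne', hnegY]
    simp only [hW]
    rw [div_eq_one_iff_eq hden]
    linear_combination t ^ 2 * h3
  have hx : W.addX t t (W.slope t t t t) = t := by
    rw [hslope]
    simp only [addX, hW]
    linear_combination -t * h3
  have hy : W.addY t t t (W.slope t t t t) = W.negY t t := by
    rw [addY, negAddY, hx, hslope, hnegY, hnegY]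
    ring
  have h3P : P + P + P = 0 := by
    rw [hPdef, add_of_Y_ne htne']
    exact add_of_Y_eq hx hy
  have hsmul : (3 : ℕ) • P = 0 := by
    rw [show (3 : ℕ) = 2 + 1 by rfl, add_nsmul, two_nsmul, one_nsmul, h3P]
  have hPne : P ≠ 0 := by
    rw [hPdef]
    exact fun h => by cases h
  -- the equiv between points of W and Option of affine solutions
  have hcond : ∀ x y : F, W.Nonsingular x y ↔ y ^ 2 = x ^ 3 + x ^ 2 - r⁻¹ := by
    intro x y
    constructor
    · intro h
      have := h.1
      rw [equation_iff] at this
      simp only [hW] at this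
      linear_combination this
    · intro h
      apply (W.equation_iff_nonsingular_of_Δ_ne_zero hΔ).mp
      rw [equation_iff]
      simp only [hW]
      linear_combination h
  classical
  let e : W.Point ≃ Option {p : F × F // p.2 ^ 2 = p.1 ^ 3 + p.1 ^ 2 - r⁻¹} :=
    { toFun := fun Q => match Q with
        | Point.zero => Option.none
        | Point.some x y h => Option.some ⟨(x, y), (hcond x y).mp h⟩
      invFun := fun o => match o with
        | Option.none => Point.zero
        | Option.some ⟨(x, y), h⟩ => Point.some _ _ ((hcond x y).mpr h)
      left_inv := by rintro (_ | h) <;> rfl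
      right_inv := by rintro (_ | ⟨⟨x, y⟩, h⟩) <;> rfl }
  have hfin : Finite {p : F × F // p.2 ^ 2 = p.1 ^ 3 + p.1 ^ 2 - r⁻¹} :=
    Subtype.finite
  have hfinP : Finite W.Point := Finite.of_equiv _ e.symm
  have hcard : Nat.card W.Point = 1 + Nat.card {p : F × F // p.2 ^ 2 = p.1 ^ 3 + p.1 ^ 2 - r⁻¹} := by
    rw [Nat.card_congr e, Finite.card_option, add_comm]
  rw [← hcard]
  have hord : addOrderOf P = 3 := by
    apply addOrderOf_eq_prime hsmul hPne
  rw [← hord]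
  exact addOrderOf_dvd_natCard P
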